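/- Let α be a positive even integer and p ≥ α + 3 a prime. Then Σ_{l=1}^{p-1} 1/l^α ≡ 0 (mod p), where inverses are taken in ℤ/pℤ. -/

import Mathlib

theorem stmt8 (p α : ℕ) (hp : p.Prime) (hα : 0 < α) (heven : Even α) (hpα : α + 3 ≤ p) :
    (∑ l ∈ Finset.Ico 1 p, ((l : ZMod p) ^ α)⁻¹) = 0 := by
  haveI : Fact p.Prime := ⟨hp⟩
  have h0 : (∑ l ∈ Finset.Ico 1 p, ((l : ZMod p) ^ α)⁻¹)
      = ∑ l ∈ Finset.range p, ((l : ZMod p) ^ α)⁻¹ := by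
    rw [Finset.range_eq_Ico, show Finset.Ico 0 p = insert 0 (Finset.Ico 1 p) by
      exact (Finset.insert_Ico_add_one_left_eq_Ico hp.pos).symm, Finset.sum_insert (by simp)]
    simp [zero_pow hα.ne']
  have h1 : (∑ l ∈ Finset.range p, ((l : ZMod p) ^ α)⁻¹)
      = ∑ x : ZMod p, (x ^ α)⁻¹ := by
    refine Finset.sum_nbij' (i := fun l => (l : ZMod p)) (j := fun x => x.val) ?_ ?_ ?_ ?_ ?_
    · simp
    · intro x _; exact Finset.mem_range.2 (ZMod.val_lt x)
    · intro l hl; exact ZMod.val_natCast_of_lt (Finset.mem_range.1 hl)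
    · intro x _; exact ZMod.natCast_rightInverse x
    · intro l _; rfl
  have h2 : (∑ x : ZMod p, (x ^ α)⁻¹) = ∑ x : ZMod p, x ^ α :=
    Fintype.sum_equiv (Equiv.inv (ZMod p)) _ _ (fun x => by
      rw [Equiv.inv_apply, ← inv_pow])
  rw [h0, h1, h2]
  exact FiniteField.sum_pow_lt_card_sub_one (ZMod p) α (by rw [ZMod.card]; omega)
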